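/- Conversely, if ρ is a symmetric positive function on pairs of distinct points of a finite set X (with ρ(x,x)=0) such that no point e_{x,y} lies in the interior (relative to V₀) of the convex hull of the remaining points e_{u,v}, then ρ satisfies the triangle inequality, i.e., ρ is a metric on X. -/

import Mathlib

theorem stmt_5 (X : Type*) [Fintype X] [DecidableEq X]
    (hn : 3 ≤ Fintype.card X)
    (ρ : X → X → ℝ)
    (hsymm : ∀ x y : X, ρ x y = ρ y x)
    (hpos : ∀ x y : X, x ≠ y → 0 < ρ x y)
    (hzero : ∀ x : X, ρ x x = 0)
    (δ : X → X → ℝ)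
    (hδ : ∀ x y : X, δ x y =
      if y = x then ((Fintype.card X : ℝ) - 1) / (Fintype.card X : ℝ)
      else -1 / (Fintype.card X : ℝ))
    (e : X → X → (X → ℝ))
    (he : ∀ x y : X, e x y = (ρ x y)⁻¹ • (δ x - δ y))
    (hext : ∀ x y : X, x ≠ y →
      e x y ∉ intrinsicInterior ℝ
        (convexHull ℝ {v : X → ℝ | ∃ u w : X, u ≠ w ∧ (u, w) ≠ (x, y) ∧ v = e u w})) :
    ∀ x y z : X, ρ x z ≤ ρ x y + ρ y z := by
  classical
  by_contra hcon
  push_neg at hcon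
  obtain ⟨x, y, z, hlt⟩ := hcon
  have hnonneg : ∀ u w : X, 0 ≤ ρ u w := by
    intro u w
    rcases eq_or_ne u w with rfl | h
    · rw [hzero]
    · exact (hpos u w h).le
  have hxy : x ≠ y := by rintro rfl; rw [hzero] at hlt; linarith
  have hyz : y ≠ z := by rintro rfl; rw [hzero] at hlt; linarith
  have hxz : x ≠ z := by
    rintro rfl
    rw [hzero] at hlt
    have := hnonneg x y; have := hnonneg y x; linarith
  -- basic facts about δ and e
  have hnpos : (0:ℝ) < (Fintype.card X : ℝ) := by
    have : 0 < Fintype.card X := by omega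
    exact_mod_cast this
  have hδ' : ∀ u t : X, δ u t = (if t = u then 1 else 0) - 1 / (Fintype.card X : ℝ) := by
    intro u t
    rw [hδ]
    split_ifs
    · field_simp
    · ring
  have hδsub : ∀ u w t : X, δ u t - δ w t
      = (if t = u then (1:ℝ) else 0) - (if t = w then 1 else 0) := by
    intro u w t
    rw [hδ' u t, hδ' w t]
    ring
  have heneg : ∀ u w : X, e w u = - e u w := by
    intro u w
    rw [he, he, hsymm w u]
    ext t
    simp only [Pi.smul_apply, Pi.sub_apply, Pi.neg_apply, smul_eq_mul]
    ring
  have hesum : ∀ u w : X, ∑ t, e u w t = 0 := by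
    intro u w
    rw [he]
    simp only [Pi.smul_apply, Pi.sub_apply, smul_eq_mul]
    rw [← Finset.mul_sum]
    have : ∑ t, (δ u t - δ w t) = 0 := by
      simp only [hδsub]
      rw [Finset.sum_sub_distrib]
      rw [Finset.sum_ite_eq' Finset.univ u (fun _ => (1:ℝ)),
        Finset.sum_ite_eq' Finset.univ w (fun _ => (1:ℝ))]
      simp
    rw [this, mul_zero]
  have hρxy : ρ x y ≠ 0 := (hpos x y hxy).ne'
  have hρyz : ρ y z ≠ 0 := (hpos y z hyz).ne'
  have hρxz : ρ x z ≠ 0 := (hpos x z hxz).ne'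
  have haux : ∀ a c : ℝ, a ≠ 0 → (a / c) * a⁻¹ = c⁻¹ := by
    intro a c ha
    rw [div_mul_eq_mul_div, mul_inv_cancel₀ ha, one_div]
  have hkey : e x z = (ρ x y / ρ x z) • e x y + (ρ y z / ρ x z) • e y z := by
    have h1 := haux (ρ x y) (ρ x z) hρxy
    have h2 := haux (ρ y z) (ρ x z) hρyz
    rw [he, he, he, smul_smul, smul_smul, h1, h2, ← smul_add]
    congr 1
    abel
  have hext' := hext x z hxz
  set S : Set (X → ℝ) := {v : X → ℝ | ∃ u w : X, u ≠ w ∧ (u, w) ≠ (x, z) ∧ v = e u w} with hSdef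
  set A : Finset (X × X) := Finset.univ.filter (fun p : X × X => p.1 ≠ p.2) with hAdef
  set P : Finset (X × X) := A.erase (x, z) with hPdef
  have hmemP : ∀ u w : X, u ≠ w → (u, w) ≠ (x, z) → (u, w) ∈ P := by
    intro u w h1 h2
    rw [hPdef, Finset.mem_erase, hAdef, Finset.mem_filter]
    exact ⟨h2, Finset.mem_univ _, h1⟩
  have hmemP' : ∀ p : X × X, p ∈ P → p.1 ≠ p.2 ∧ p ≠ (x, z) := by
    intro p hp
    rw [hPdef, Finset.mem_erase, hAdef, Finset.mem_filter] at hp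
    exact ⟨hp.2.2, hp.1⟩
  have hsumA : ∑ p ∈ A, e p.1 p.2 = 0 := by
    apply Finset.sum_involution (fun p _ => p.swap)
    · intro p hp
      simp only [Prod.snd_swap, Prod.fst_swap]
      rw [heneg p.1 p.2]
      abel
    · intro p hp _ hc
      rw [Finset.mem_filter] at hp
      rw [Prod.ext_iff] at hc
      exact hp.2 hc.1.symm
    · intro p hp
      exact Prod.swap_swap p
    · intro p hp
      rw [Finset.mem_filter] at hp ⊢
      exact ⟨Finset.mem_univ _, fun h => hp.2 h.symm⟩
  have hxzA : (x, z) ∈ A := by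
    rw [hAdef, Finset.mem_filter]; exact ⟨Finset.mem_univ _, hxz⟩
  have hsumP : ∑ p ∈ P, e p.1 p.2 = - e x z := by
    have h := Finset.add_sum_erase A (fun p : X × X => e p.1 p.2) hxzA
    rw [← hPdef] at h
    rw [hsumA] at h
    have h2 : e x z + ∑ p ∈ P, e p.1 p.2 = 0 := h
    exact eq_neg_of_add_eq_zero_left (by rw [add_comm]; exact h2)
  -- positive constants
  set t1 : ℝ := ρ x y / ρ x z with ht1def
  set t2 : ℝ := ρ y z / ρ x z with ht2def
  have ht1pos : 0 < t1 := div_pos (hpos x y hxy) (hpos x z hxz)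
  have ht2pos : 0 < t2 := div_pos (hpos y z hyz) (hpos x z hxz)
  have htlt : t1 + t2 < 1 := by
    rw [ht1def, ht2def, ← add_div, div_lt_one (hpos x z hxz)]
    exact hlt
  set N : ℝ := (P.card : ℝ) with hNdef
  have hNnonneg : (0:ℝ) ≤ N := Nat.cast_nonneg _
  have hNt : 0 < N + (t1 + t2) := by linarith
  set ε0 : ℝ := (1 - (t1 + t2)) / (N + (t1 + t2)) with hε0def
  have hε0pos : 0 < ε0 := div_pos (by linarith) hNt
  set lam : X × X → ℝ := fun p =>
    ε0 + (if p = (x, y) then t1 * (1 + ε0) else 0) + (if p = (y, z) then t2 * (1 + ε0) else 0)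
    with hlamdef
  have hxyP : (x, y) ∈ P := hmemP x y hxy (fun h => hyz (congrArg Prod.snd h))
  have hyzP : (y, z) ∈ P := hmemP y z hyz (fun h => hxy (congrArg Prod.fst h).symm)
  have hyxP : (y, x) ∈ P := hmemP y x (fun h => hxy h.symm) (fun h => hxy (congrArg Prod.fst h).symm)
  have hlamnn : ∀ p, ε0 ≤ lam p := by
    intro p
    rw [hlamdef]
    have : (0:ℝ) ≤ (if p = (x, y) then t1 * (1 + ε0) else 0) := by
      split_ifs
      · exact mul_nonneg ht1pos.le (by linarith)
      · exact le_rfl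
    have : (0:ℝ) ≤ (if p = (y, z) then t2 * (1 + ε0) else 0) := by
      split_ifs
      · exact mul_nonneg ht2pos.le (by linarith)
      · exact le_rfl
    simp only []
    linarith
  have F1 : ∑ p ∈ P, lam p = 1 := by
    rw [hlamdef]
    simp only []
    rw [Finset.sum_add_distrib, Finset.sum_add_distrib, Finset.sum_const,
      Finset.sum_ite_eq' P (x, y) (fun _ => t1 * (1 + ε0)),
      Finset.sum_ite_eq' P (y, z) (fun _ => t2 * (1 + ε0)),
      if_pos hxyP, if_pos hyzP, nsmul_eq_mul, ← hNdef]
    have hNtne : N + (t1 + t2) ≠ 0 := ne_of_gt hNt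
    rw [hε0def]
    field_simp
    ring
  have F2 : ∑ p ∈ P, lam p • e p.1 p.2 = e x z := by
    rw [hlamdef]
    simp only [add_smul, ite_smul, zero_smul]
    rw [Finset.sum_add_distrib, Finset.sum_add_distrib, ← Finset.smul_sum,
      Finset.sum_ite_eq' P (x, y) (fun p => (t1 * (1 + ε0)) • e p.1 p.2),
      Finset.sum_ite_eq' P (y, z) (fun p => (t2 * (1 + ε0)) • e p.1 p.2),
      if_pos hxyP, if_pos hyzP, hsumP]
    have : (t1 * (1 + ε0)) • e x y + (t2 * (1 + ε0)) • e y z = (1 + ε0) • e x z := by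
      rw [hkey]
      ext u
      simp only [Pi.add_apply, Pi.smul_apply, smul_eq_mul]
      ring
    rw [smul_neg]
    have h9 : (t1 * (1 + ε0)) • e (x, y).1 (x, y).2 + (t2 * (1 + ε0)) • e (y, z).1 (y, z).2
        = (1 + ε0) • e x z := this
    rw [add_assoc, h9]
    ext u
    simp only [Pi.add_apply, Pi.neg_apply, Pi.smul_apply, smul_eq_mul]
    ring
  -- bound on ρ · x
  set R : ℝ := (∑ u, |ρ u x|) + 1 with hRdef
  have hRpos : 0 < R := by
    have : (0:ℝ) ≤ ∑ u, |ρ u x| := Finset.sum_nonneg (fun u _ => abs_nonneg _)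
    rw [hRdef]; linarith
  have hRb : ∀ u : X, |ρ u x| ≤ R := by
    intro u
    have h1 : |ρ u x| ≤ ∑ u, |ρ u x| :=
      Finset.single_le_sum (fun v _ => abs_nonneg (ρ v x)) (Finset.mem_univ u)
    rw [hRdef]; linarith
  set n : ℝ := (Fintype.card X : ℝ) with hndef
  set ε : ℝ := ε0 / (R * (n + 1)) with hεdef
  have hεpos : 0 < ε := by
    apply div_pos hε0pos
    apply mul_pos hRpos
    linarith
  -- the key claim: a relative neighborhood of e x z lies in the convex hull
  have KEY : ∀ v : X → ℝ, (∑ u, v u) = 0 → ‖v‖ < ε → e x z + v ∈ convexHull ℝ S := by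
    intro v hv0 hvn
    have hvnn : 0 ≤ ‖v‖ := norm_nonneg v
    set c : X → ℝ := fun u => v u * ρ u x with hcdef
    have hcb : ∀ u, |c u| ≤ ‖v‖ * R := by
      intro u
      rw [hcdef]
      simp only []
      rw [abs_mul]
      have h1 : |v u| ≤ ‖v‖ := by
        have := norm_le_pi_norm v u
        simpa using this
      exact mul_le_mul h1 (hRb u) (abs_nonneg _) hvnn
    set C : ℝ := ∑ u, (if u = x then 0 else c u) with hCdef
    have hCb : |C| ≤ n * (‖v‖ * R) := by
      rw [hCdef]
      calc |∑ u, (if u = x then 0 else c u)| ≤ ∑ u, |if u = x then 0 else c u| :=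
            Finset.abs_sum_le_sum_abs _ _
        _ ≤ ∑ _u : X, ‖v‖ * R := by
            apply Finset.sum_le_sum
            intro u _
            split_ifs
            · simp; positivity
            · exact hcb u
        _ = n * (‖v‖ * R) := by
            rw [Finset.sum_const, nsmul_eq_mul, hndef]
            simp
    set w : X × X → ℝ := fun p =>
      lam p + (if p.2 = x ∧ p.1 ≠ x then c p.1 else 0)
        - (if p = (x, y) then C / 2 else 0) - (if p = (y, x) then C / 2 else 0) with hwdef
    have hwpos : ∀ p ∈ P, 0 < w p := by
      intro p _
      rw [hwdef]
      simp only []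
      clear_value c C lam n R ε0 ε N t1 t2
      have hn0 : (0:ℝ) ≤ n := by rw [hndef]; positivity
      have hvR : (0:ℝ) ≤ ‖v‖ * R := mul_nonneg hvnn hRpos.le
      have hnvR : (0:ℝ) ≤ n * (‖v‖ * R) := mul_nonneg hn0 hvR
      have e1 : -(‖v‖ * R) ≤ (if p.2 = x ∧ p.1 ≠ x then c p.1 else 0) := by
        split_ifs with h
        · linarith [(abs_le.mp (hcb p.1)).1]
        · linarith
      have e2 : (if p = (x, y) then C / 2 else 0) ≤ n * (‖v‖ * R) / 2 := by
        have hC1 := (abs_le.mp hCb).2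
        split_ifs
        · linarith
        · linarith
      have e3 : (if p = (y, x) then C / 2 else 0) ≤ n * (‖v‖ * R) / 2 := by
        have hC1 := (abs_le.mp hCb).2
        split_ifs
        · linarith
        · linarith
      have e4 : ε0 ≤ lam p := hlamnn p
      have e5 : ‖v‖ * (R * (n + 1)) < ε0 := by
        have hpos2 : 0 < R * (n + 1) := by apply mul_pos hRpos; linarith
        calc ‖v‖ * (R * (n + 1)) < ε * (R * (n + 1)) := by
              apply mul_lt_mul_of_pos_right hvn hpos2
          _ = ε0 := by
              rw [hεdef]; field_simp
      have e6 : ‖v‖ * (R * (n + 1)) = ‖v‖ * R + n * (‖v‖ * R) := by ring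
      linarith
    have hP0 : ∀ p : X × X, p ∉ P → ¬(p.2 = x ∧ p.1 ≠ x) := by
      intro p hp h
      apply hp
      have h1 : p.1 ≠ p.2 := by rw [h.1]; exact h.2
      have h2 : (p.1, p.2) ≠ (x, z) := by
        intro hc
        have := congrArg Prod.snd hc
        simp only [] at this
        rw [h.1] at this
        exact hxz this
      rw [← Prod.mk.eta (p := p)]
      exact hmemP p.1 p.2 h1 h2
    have Csum : ∑ p ∈ P, (if p.2 = x ∧ p.1 ≠ x then c p.1 else 0) = C := by
      rw [Finset.sum_subset (Finset.subset_univ P) (fun p _ hnp => if_neg (hP0 p hnp))]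
      rw [Fintype.sum_prod_type, hCdef]
      apply Finset.sum_congr rfl
      intro u _
      by_cases hu : u = x
      · subst hu; simp
      · simp [hu]
    have Vsum : ∑ p ∈ P, (if p.2 = x ∧ p.1 ≠ x then c p.1 • e p.1 p.2 else 0) = v := by
      rw [Finset.sum_subset (Finset.subset_univ P)
        (fun p _ hnp => if_neg (hP0 p hnp))]
      rw [Fintype.sum_prod_type]
      have inner : ∀ u : X, (∑ w' : X, (if w' = x ∧ u ≠ x then c u • e u w' else 0))
          = if u = x then 0 else c u • e u x := by
        intro u
        by_cases hu : u = x
        · subst hu; simp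
        · simp [hu, ite_smul]
      rw [Finset.sum_congr rfl (fun u _ => inner u)]
      ext t
      rw [Finset.sum_apply]
      have term : ∀ u : X, (if u = x then (0:X→ℝ) else c u • e u x) t
          = if u = x then 0 else v u * ((if t = u then 1 else 0) - if t = x then 1 else 0) := by
        intro u
        by_cases hu : u = x
        · simp [hu]
        · rw [if_neg hu, if_neg hu]
          have hρ : ρ u x ≠ 0 := (hpos u x hu).ne'
          rw [he]
          simp only [Pi.smul_apply, Pi.sub_apply, smul_eq_mul, hcdef]
          rw [hδsub]
          field_simp
      rw [Finset.sum_congr rfl (fun u _ => term u)]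
      by_cases ht : t = x
      · have step : ∀ u : X, (if u = x then (0:ℝ)
            else v u * ((if t = u then 1 else 0) - if t = x then 1 else 0))
            = (if u = x then v u else 0) - v u := by
          intro u
          by_cases hu : u = x
          · rw [if_pos hu, if_pos hu]; ring
          · rw [if_neg hu, if_neg hu, if_pos ht, if_neg (fun h : t = u => hu (h.symm.trans ht))]
            ring
        rw [Finset.sum_congr rfl (fun u _ => step u), Finset.sum_sub_distrib,
          Finset.sum_ite_eq' Finset.univ x (fun u => v u), if_pos (Finset.mem_univ x), hv0, ht]
        simp
      · have step : ∀ u : X, (if u = x then (0:ℝ)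
            else v u * ((if t = u then 1 else 0) - if t = x then 1 else 0))
            = if u = t then v t else 0 := by
          intro u
          by_cases hu : u = x
          · subst hu
            rw [if_pos rfl, if_neg (fun h : u = t => ht h.symm)]
          · rw [if_neg hu, if_neg (fun h : t = x => ht h)]
            by_cases hut : u = t
            · subst hut; rw [if_pos rfl, if_pos rfl]; ring
            · rw [if_neg (fun h : t = u => hut h.symm), if_neg hut]; ring
        rw [Finset.sum_congr rfl (fun u _ => step u),
          Finset.sum_ite_eq' Finset.univ t (fun _ => v t), if_pos (Finset.mem_univ t)]
    have G1 : ∑ p ∈ P, w p = 1 := by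
      rw [hwdef]
      simp only []
      rw [Finset.sum_sub_distrib, Finset.sum_sub_distrib, Finset.sum_add_distrib, F1, Csum,
        Finset.sum_ite_eq' P (x, y) (fun _ => C / 2),
        Finset.sum_ite_eq' P (y, x) (fun _ => C / 2), if_pos hxyP, if_pos hyxP]
      ring
    have G2 : ∑ p ∈ P, w p • e p.1 p.2 = e x z + v := by
      rw [hwdef]
      simp only [sub_smul, add_smul, ite_smul, zero_smul]
      rw [Finset.sum_sub_distrib, Finset.sum_sub_distrib, Finset.sum_add_distrib, F2, Vsum,
        Finset.sum_ite_eq' P (x, y) (fun p => (C / 2) • e p.1 p.2),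
        Finset.sum_ite_eq' P (y, x) (fun p => (C / 2) • e p.1 p.2), if_pos hxyP, if_pos hyxP]
      have hyxneg : e ((y, x) : X × X).1 ((y, x) : X × X).2 = - e x y := heneg x y
      rw [hyxneg]
      ext u
      simp only [Pi.add_apply, Pi.sub_apply, Pi.smul_apply, Pi.neg_apply, smul_eq_mul]
      ring
    have hcm := Finset.centerMass_mem_convexHull P (w := w)
      (fun p hp => (hwpos p hp).le) (by rw [G1]; exact one_pos)
      (z := fun p => e p.1 p.2) (s := S) ?_
    · rwa [Finset.centerMass, G1, inv_one, one_smul, G2] at hcm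
    · intro p hp
      obtain ⟨h1, h2⟩ := hmemP' p hp
      rw [hSdef]
      exact ⟨p.1, p.2, h1, by rwa [Prod.mk.eta], rfl⟩
  -- everything in the affine span of the hull has coordinate sum zero
  set L : (X → ℝ) →ₗ[ℝ] ℝ :=
    { toFun := fun f => ∑ u, f u
      map_add' := by intro f g; simp [Finset.sum_add_distrib]
      map_smul' := by intro a f; simp [Finset.mul_sum] } with hLdef
  have hLval : ∀ f : X → ℝ, L f = ∑ u, f u := fun f => rfl
  have hsub : convexHull ℝ S ⊆ (LinearMap.ker L : Set (X → ℝ)) := by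
    apply convexHull_min
    · rintro f ⟨u, w, h1, h2, rfl⟩
      simp only [SetLike.mem_coe, LinearMap.mem_ker, hLval]
      exact hesum u w
    · exact (LinearMap.ker L).convex
  have haff : ∀ f : X → ℝ, f ∈ affineSpan ℝ (convexHull ℝ S) → ∑ u, f u = 0 := by
    intro f hf
    have h1 := affineSpan_le_toAffineSubspace_span hf
    have h1' : f ∈ Submodule.span ℝ (convexHull ℝ S) := h1
    have h3 := Submodule.span_le.mpr hsub h1'
    rw [LinearMap.mem_ker, hLval] at h3
    exact h3
  have hpmem : e x z ∈ convexHull ℝ S := by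
    have h := KEY 0 (by simp) (by simpa using hεpos)
    simpa using h
  have hpaff : e x z ∈ affineSpan ℝ (convexHull ℝ S) := subset_affineSpan ℝ _ hpmem
  apply hext'
  rw [mem_intrinsicInterior]
  refine ⟨⟨e x z, hpaff⟩, ?_, rfl⟩
  rw [mem_interior]
  refine ⟨Metric.ball ⟨e x z, hpaff⟩ ε, ?_, Metric.isOpen_ball, Metric.mem_ball_self hεpos⟩
  rintro ⟨q, hq⟩ hball
  rw [Set.mem_preimage]
  show q ∈ convexHull ℝ S
  have hd : dist q (e x z) < ε := by
    rw [Metric.mem_ball, Subtype.dist_eq] at hball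
    exact hball
  have hsum0 : ∑ u, (q - e x z) u = 0 := by
    have h1 := haff q hq
    have h2 := haff _ hpaff
    simp only [Pi.sub_apply, Finset.sum_sub_distrib, h1, h2, sub_zero]
  have hmem := KEY (q - e x z) hsum0 (by rwa [dist_eq_norm] at hd)
  rwa [show e x z + (q - e x z) = q from by abel] at hmem
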